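/- Let c, K, R, S₀ ∈ ℝ with c, R, K > 0, and define the ideal gas entropy S(u, v, n) = n·R·log(K·v·u^c·n^{−(c+1)}) + S₀ on the open positive octant of ℝ³. Then for every point p = (u,v,n) with u, v, n > 0, the Hessian of −S at p is given by the matrix R·[[c·n/u², 0, −c/u], [0, n/v², −1/v], [−c/u, −1/v, (c+1)/n]] with respect to the coordinates (u,v,n), and this matrix applied to the vector (u, v, n) is zero (the Euler vector field lies in the kernel of ♭). -/

import Mathlib

/-- The entropy of an ideal gas as a function of internal energy `u`,
volume `v`, and number of particles `n`:
`S(u,v,n) = n·R·log(K·v·u^c·n^(−(c+1))) + S₀`. -/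
noncomputable def idealGasEntropy (c K R S₀ : ℝ) (u v n : ℝ) : ℝ :=
  n * R * Real.log (K * v * u ^ c * n ^ (-(c + 1))) + S₀

/-- The negative ideal gas entropy as a function on `ℝ³`
(coordinates `(u, v, n)` in the entropy representation). -/
noncomputable def idealGasPotential (c K R S₀ : ℝ)
    (p : EuclideanSpace ℝ (Fin 3)) : ℝ :=
  -idealGasEntropy c K R S₀ (p 0) (p 1) (p 2)

namespace IdealGasAux

abbrev E3 := EuclideanSpace ℝ (Fin 3)

noncomputable def pr (i : Fin 3) : E3 →L[ℝ] ℝ := EuclideanSpace.proj i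

@[simp] lemma pr_apply (i : Fin 3) (x : E3) : pr i x = x i := rfl

lemma hasFDerivAt_coord (i : Fin 3) (x : E3) :
    HasFDerivAt (fun q : E3 => q i) (pr i) x := (pr i).hasFDerivAt

noncomputable def row (x y z : ℝ) : E3 →L[ℝ] ℝ := x • pr 0 + y • pr 1 + z • pr 2

@[simp] lemma row_apply (x y z : ℝ) (q : E3) :
    row x y z q = x * q 0 + y * q 1 + z * q 2 := by
  simp [row, mul_comm]

lemma isOpen_octant : IsOpen {q : E3 | 0 < q 0 ∧ 0 < q 1 ∧ 0 < q 2} := by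
  have h : ∀ i : Fin 3, IsOpen {q : E3 | 0 < q i} := fun i =>
    isOpen_Ioi.preimage (pr i).continuous
  exact (h 0).inter ((h 1).inter (h 2))

/-- the model function with expanded logarithm -/
noncomputable def fmod (c K R S₀ : ℝ) (q : E3) : ℝ :=
  -(q 2 * R * (Real.log K + Real.log (q 1) + c * Real.log (q 0)
      - (c + 1) * Real.log (q 2))) - S₀

/-- the explicit first derivative of `fmod` -/
noncomputable def Dmod (c K R : ℝ) (q : E3) : E3 →L[ℝ] ℝ :=
  (-(R * c * (q 2 * (q 0)⁻¹))) • pr 0 + (-(R * (q 2 * (q 1)⁻¹))) • pr 1 +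
    (-(R * (Real.log K + Real.log (q 1) + c * Real.log (q 0)
      - (c + 1) * Real.log (q 2))) + (c + 1) * R) • pr 2

lemma hasFDerivAt_L (c K : ℝ) (q : E3)
    (h0 : 0 < q 0) (h1 : 0 < q 1) (h2 : 0 < q 2) :
    HasFDerivAt (fun q : E3 => Real.log K + Real.log (q 1)
      + c * Real.log (q 0) - (c + 1) * Real.log (q 2))
      (((q 1)⁻¹ • pr 1 + c • ((q 0)⁻¹ • pr 0)) - (c + 1) • ((q 2)⁻¹ • pr 2)) q := by
  have l0 := ((hasFDerivAt_coord 0 q).log h0.ne').const_mul c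
  have l1 := (hasFDerivAt_coord 1 q).log h1.ne'
  have l2 := ((hasFDerivAt_coord 2 q).log h2.ne').const_mul (c + 1)
  exact ((l1.const_add (Real.log K)).add l0).sub l2

lemma hasFDerivAt_fmod (c K R S₀ : ℝ) (q : E3)
    (h0 : 0 < q 0) (h1 : 0 < q 1) (h2 : 0 < q 2) :
    HasFDerivAt (fmod c K R S₀) (Dmod c K R q) q := by
  have hg := ((hasFDerivAt_coord 2 q).mul_const R).mul (hasFDerivAt_L c K q h0 h1 h2)
  have hf := (hg.neg).sub_const S₀
  refine hf.congr_fderiv ?_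
  ext x
  have e0 : (q 0 : ℝ) ≠ 0 := h0.ne'
  have e1 : (q 1 : ℝ) ≠ 0 := h1.ne'
  have e2 : (q 2 : ℝ) ≠ 0 := h2.ne'
  simp [Dmod, ContinuousLinearMap.smulRight_apply, mul_comm]
  field_simp
  ring

lemma potential_eq_fmod (c K R S₀ : ℝ) (hK : 0 < K) (q : E3)
    (h0 : 0 < q 0) (h1 : 0 < q 1) (h2 : 0 < q 2) :
    idealGasPotential c K R S₀ q = fmod c K R S₀ q := by
  unfold idealGasPotential idealGasEntropy fmod
  rw [Real.log_mul (by positivity) (Real.rpow_pos_of_pos h2 _).ne',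
    Real.log_mul (by positivity) (Real.rpow_pos_of_pos h0 _).ne',
    Real.log_mul hK.ne' h1.ne', Real.log_rpow h0, Real.log_rpow h2]
  ring

lemma fderiv_potential_eq (c K R S₀ : ℝ) (hK : 0 < K) (q : E3)
    (h0 : 0 < q 0) (h1 : 0 < q 1) (h2 : 0 < q 2) :
    fderiv ℝ (idealGasPotential c K R S₀) q = Dmod c K R q := by
  have hmem : {q : E3 | 0 < q 0 ∧ 0 < q 1 ∧ 0 < q 2} ∈ nhds q :=
    isOpen_octant.mem_nhds ⟨h0, h1, h2⟩
  have hEq : idealGasPotential c K R S₀ =ᶠ[nhds q] fmod c K R S₀ :=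
    Filter.eventuallyEq_of_mem hmem fun x hx =>
      potential_eq_fmod c K R S₀ hK x hx.1 hx.2.1 hx.2.2
  rw [hEq.fderiv_eq]
  exact (hasFDerivAt_fmod c K R S₀ q h0 h1 h2).fderiv

end IdealGasAux

set_option maxHeartbeats 2000000 in
open IdealGasAux in
theorem idealGas_hessian_matrix_and_euler_null
    (c K R S₀ : ℝ) (hc : 0 < c) (hR : 0 < R) (hK : 0 < K)
    (p : EuclideanSpace ℝ (Fin 3)) (hu : 0 < p 0) (hv : 0 < p 1) (hn : 0 < p 2) :
    (∀ i j : Fin 3,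
        fderiv ℝ (fderiv ℝ (idealGasPotential c K R S₀)) p
            (EuclideanSpace.single i 1) (EuclideanSpace.single j 1) =
          (R • !![c * p 2 / (p 0) ^ 2, 0, -c / p 0;
                  0, p 2 / (p 1) ^ 2, -1 / p 1;
                  -c / p 0, -1 / p 1, (c + 1) / p 2]) i j) ∧
      (R • !![c * p 2 / (p 0) ^ 2, 0, -c / p 0;
              0, p 2 / (p 1) ^ 2, -1 / p 1;
              -c / p 0, -1 / p 1, (c + 1) / p 2]).mulVec ![p 0, p 1, p 2] = 0 := by
  have e0 : (p 0 : ℝ) ≠ 0 := hu.ne'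
  have e1 : (p 1 : ℝ) ≠ 0 := hv.ne'
  have e2 : (p 2 : ℝ) ≠ 0 := hn.ne'
  constructor
  · -- Hessian entries
    have hα : HasFDerivAt (fun q : E3 => -(R * c * (q 2 * (q 0)⁻¹)))
        (row (R * c * p 2 / p 0 ^ 2) 0 (-(R * c) / p 0)) p := by
      have hdinv : HasFDerivAt (fun q : E3 => (q 0)⁻¹)
          ((ContinuousLinearMap.smulRight (1 : ℝ →L[ℝ] ℝ) (-((p 0) ^ 2)⁻¹)).comp (pr 0)) p :=
        (hasFDerivAt_inv e0).comp p (hasFDerivAt_coord 0 p)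
      have h2 := (((hasFDerivAt_coord 2 p).mul hdinv).const_mul (R * c)).neg
      refine h2.congr_fderiv ?_
      ext x
      simp [ContinuousLinearMap.smulRight_apply, mul_comm]
      field_simp
      ring
    have hβ : HasFDerivAt (fun q : E3 => -(R * (q 2 * (q 1)⁻¹)))
        (row 0 (R * p 2 / p 1 ^ 2) (-R / p 1)) p := by
      have hdinv : HasFDerivAt (fun q : E3 => (q 1)⁻¹)
          ((ContinuousLinearMap.smulRight (1 : ℝ →L[ℝ] ℝ) (-((p 1) ^ 2)⁻¹)).comp (pr 1)) p :=
        (hasFDerivAt_inv e1).comp p (hasFDerivAt_coord 1 p)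
      have h2 := (((hasFDerivAt_coord 2 p).mul hdinv).const_mul R).neg
      refine h2.congr_fderiv ?_
      ext x
      simp [ContinuousLinearMap.smulRight_apply, mul_comm]
      field_simp
      ring
    have hγ : HasFDerivAt (fun q : E3 =>
        -(R * (Real.log K + Real.log (q 1) + c * Real.log (q 0)
            - (c + 1) * Real.log (q 2))) + (c + 1) * R)
        (row (-(R * c) / p 0) (-R / p 1) (R * (c + 1) / p 2)) p := by
      have h2 := (((hasFDerivAt_L c K p hu hv hn).const_mul R).neg).add_const ((c + 1) * R)
      refine h2.congr_fderiv ?_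
      ext x
      simp [ContinuousLinearMap.smulRight_apply, mul_comm]
      field_simp
      ring
    have hD0 := ((hα.smul (hasFDerivAt_const (pr 0) p)).add
      (hβ.smul (hasFDerivAt_const (pr 1) p))).add
      (hγ.smul (hasFDerivAt_const (pr 2) p))
    have hD : HasFDerivAt (Dmod c K R) _ p := hD0
    have hmem : {q : E3 | 0 < q 0 ∧ 0 < q 1 ∧ 0 < q 2} ∈ nhds p :=
      isOpen_octant.mem_nhds ⟨hu, hv, hn⟩
    have hEq : fderiv ℝ (idealGasPotential c K R S₀) =ᶠ[nhds p] Dmod c K R :=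
      Filter.eventuallyEq_of_mem hmem fun x hx =>
        fderiv_potential_eq c K R S₀ hK x hx.1 hx.2.1 hx.2.2
    have key := hEq.fderiv_eq.trans hD.fderiv
    intro i j
    rw [key]
    fin_cases i <;> fin_cases j <;>
      simp [ContinuousLinearMap.smulRight_apply, EuclideanSpace.single_apply,
        Matrix.smul_apply, row] <;>
      (try field_simp) <;> (try ring)
  · funext k
    fin_cases k <;>
      · simp [Matrix.mulVec, dotProduct, Fin.sum_univ_three]
        field_simp
        ring
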